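/- Let F ≨ F′ ≤ Sym(Ω). Then the group K(F,F′), the stabilizer of a vertex v₀ of T_d in G(F,F′), is an ICC group: every non-trivial element of K(F,F′) has an infinite conjugacy class in K(F,F′). -/

import Mathlib

namespace PrescribedLocalAction

open scoped Classical

variable {V Ω : Type*}

/-- A permutation of the vertices is an automorphism of `T` if it preserves adjacency. -/
def IsGraphAut (T : SimpleGraph V) (g : Equiv.Perm V) : Prop :=
  ∀ u w : V, T.Adj (g u) (g w) ↔ T.Adj u w

/-- Membership in the group `G(F,F')` of tree automorphisms whose local
permutations lie in `F'` everywhere and in `F` almost everywhere. -/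
def MemGFF (T : SimpleGraph V) (σ : Equiv.Perm V → V → Equiv.Perm Ω)
    (F F' : Subgroup (Equiv.Perm Ω)) (g : Equiv.Perm V) : Prop :=
  IsGraphAut T g ∧ (∀ v : V, σ g v ∈ F') ∧ {v : V | σ g v ∉ F}.Finite

noncomputable def alpha' (F F' : Subgroup (Equiv.Perm Ω)) (n : ℕ)
    (e : (F' ⧸ F.subgroupOf F') ≃ Fin n) (π : Equiv.Perm Ω) : Equiv.Perm (Fin n) :=
  if h : π ∈ F' then Equiv.permCongr e (MulAction.toPerm (⟨π, h⟩ : F')) else 1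

noncomputable def rho (σ : Equiv.Perm V → V → Equiv.Perm Ω)
    (F F' : Subgroup (Equiv.Perm Ω)) (n : ℕ)
    (e : (F' ⧸ F.subgroupOf F') ≃ Fin n) (γ : Equiv.Perm V) (v : V) :
    Equiv.Perm (Fin n) :=
  alpha' F F' n e (σ γ (γ⁻¹ v))

theorem _root_.Equiv.Perm.inv_apply_self {α : Type*} (f : Equiv.Perm α) (x : α) :
    f⁻¹ (f x) = x := f.symm_apply_apply x

theorem _root_.Equiv.Perm.apply_inv_self {α : Type*} (f : Equiv.Perm α) (x : α) :
    f (f⁻¹ x) = x := f.apply_symm_apply x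

section Infra

variable {T : SimpleGraph V}

/-- The colors along a walk. -/
def wcolors (c : V → V → Ω) {x y : V} (P : T.Walk x y) : List Ω :=
  P.darts.map fun d => c d.fst d.snd

@[simp] lemma wcolors_nil (c : V → V → Ω) {x : V} :
    wcolors c (SimpleGraph.Walk.nil : T.Walk x x) = [] := rfl

@[simp] lemma wcolors_cons (c : V → V → Ω) {x z y : V} (h : T.Adj x z) (P : T.Walk z y) :
    wcolors c (SimpleGraph.Walk.cons h P) = c x z :: wcolors c P := rfl

lemma wcolors_append (c : V → V → Ω) {x y z : V} (P : T.Walk x y) (Q : T.Walk y z) :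
    wcolors c (P.append Q) = wcolors c P ++ wcolors c Q := by
  simp [wcolors, SimpleGraph.Walk.darts_append]

lemma wcolors_concat (c : V → V → Ω) {x y z : V} (P : T.Walk x y) (h : T.Adj y z) :
    wcolors c (P.concat h) = wcolors c P ++ [c y z] := by
  rw [SimpleGraph.Walk.concat_eq_append, wcolors_append, wcolors_cons, wcolors_nil]

variable {c : V → V → Ω}

/-- The neighbor of `v` in direction `ω`. -/
noncomputable def nbr (hbij : ∀ v : V, Set.BijOn (fun w => c v w) (T.neighborSet v) Set.univ)
    (v : V) (ω : Ω) : V :=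
  ((hbij v).2.2 (Set.mem_univ ω)).choose

lemma nbr_adj (hbij : ∀ v : V, Set.BijOn (fun w => c v w) (T.neighborSet v) Set.univ)
    (v : V) (ω : Ω) : T.Adj v (nbr hbij v ω) :=
  ((hbij v).2.2 (Set.mem_univ ω)).choose_spec.1

lemma c_nbr (hbij : ∀ v : V, Set.BijOn (fun w => c v w) (T.neighborSet v) Set.univ)
    (v : V) (ω : Ω) : c v (nbr hbij v ω) = ω :=
  ((hbij v).2.2 (Set.mem_univ ω)).choose_spec.2

lemma nbr_c (hbij : ∀ v : V, Set.BijOn (fun w => c v w) (T.neighborSet v) Set.univ)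
    {v w : V} (h : T.Adj v w) : nbr hbij v (c v w) = w :=
  (hbij v).2.1 (nbr_adj hbij v (c v w)) h (c_nbr hbij v (c v w))

/-- Follow a list of colors starting from `v`. -/
noncomputable def follow (hbij : ∀ v : V, Set.BijOn (fun w => c v w) (T.neighborSet v) Set.univ)
    (v : V) (l : List Ω) : V :=
  l.foldl (nbr hbij) v

@[simp] lemma follow_nil (hbij : ∀ v : V, Set.BijOn (fun w => c v w) (T.neighborSet v) Set.univ)
    (v : V) : follow hbij v [] = v := rfl

lemma follow_cons (hbij : ∀ v : V, Set.BijOn (fun w => c v w) (T.neighborSet v) Set.univ)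
    (v : V) (ω : Ω) (l : List Ω) : follow hbij v (ω :: l) = follow hbij (nbr hbij v ω) l := rfl

lemma follow_append (hbij : ∀ v : V, Set.BijOn (fun w => c v w) (T.neighborSet v) Set.univ)
    (v : V) (l₁ l₂ : List Ω) :
    follow hbij v (l₁ ++ l₂) = follow hbij (follow hbij v l₁) l₂ := by
  simp [follow, List.foldl_append]

lemma follow_snoc (hbij : ∀ v : V, Set.BijOn (fun w => c v w) (T.neighborSet v) Set.univ)
    (v : V) (l : List Ω) (ω : Ω) :
    follow hbij v (l ++ [ω]) = nbr hbij (follow hbij v l) ω := by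
  rw [follow_append]; rfl

lemma follow_wcolors (hbij : ∀ v : V, Set.BijOn (fun w => c v w) (T.neighborSet v) Set.univ)
    {x y : V} (P : T.Walk x y) : follow hbij x (wcolors c P) = y := by
  induction P with
  | nil => rfl
  | cons h P ih => rw [wcolors_cons, follow_cons, nbr_c hbij h, ih]

lemma chain'_wcolors (hsym : ∀ u w : V, c u w = c w u)
    (hbij : ∀ v : V, Set.BijOn (fun w => c v w) (T.neighborSet v) Set.univ)
    {x y : V} (P : T.Walk x y) (hP : P.IsPath) : List.Chain' (· ≠ ·) (wcolors c P) := by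
  induction P with
  | nil => exact List.isChain_nil
  | @cons x z y h P ih =>
    rw [SimpleGraph.Walk.cons_isPath_iff] at hP
    rw [wcolors_cons]
    refine List.isChain_cons.mpr ⟨?_, ih hP.1⟩
    intro b hb
    cases P with
    | nil => simp at hb
    | @cons z y₁ y' h' P' =>
      rw [wcolors_cons] at hb
      simp only [List.head?_cons, Option.mem_def, Option.some.injEq] at hb
      subst hb
      intro hEq
      have hxy : x ≠ y₁ := by
        intro hxy; subst hxy
        exact hP.2 (by simp [SimpleGraph.Walk.support_cons])
      apply hxy
      have h1 : c z x = c z y₁ := by rw [← hsym x z]; exact hEq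
      exact (hbij z).2.1 h.symm h' h1

end Infra

section Codes

variable {T : SimpleGraph V} {c : V → V → Ω}
variable (hT : T.IsTree)
variable (hsym : ∀ u w : V, c u w = c w u)
variable (hbij : ∀ v : V, Set.BijOn (fun w => c v w) (T.neighborSet v) Set.univ)

/-- The unique path between two vertices of a tree. -/
noncomputable def pathB (hT : T.IsTree) (x y : V) : T.Walk x y :=
  (hT.existsUnique_path x y).choose

lemma pathB_isPath (x y : V) : (pathB hT x y).IsPath :=
  (hT.existsUnique_path x y).choose_spec.1

lemma pathB_unique {x y : V} (P : T.Walk x y) (hP : P.IsPath) : P = pathB hT x y :=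
  (hT.existsUnique_path x y).choose_spec.2 P hP

lemma isPath_concat {x v w : V} {P : T.Walk x v} (hP : P.IsPath) (h : T.Adj v w)
    (hw : w ∉ P.support) : (P.concat h).IsPath := by
  rw [← SimpleGraph.Walk.isPath_reverse_iff, SimpleGraph.Walk.reverse_concat]
  refine (SimpleGraph.Walk.cons_isPath_iff _ _).mpr
    ⟨(SimpleGraph.Walk.isPath_reverse_iff P).mpr hP, ?_⟩
  rwa [SimpleGraph.Walk.support_reverse, List.mem_reverse]

include hT hsym in
/-- Any chain of colors can be realized by a path. -/
lemma exists_path_follow (x : V) (l : List Ω) (hl : List.Chain' (· ≠ ·) l) :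
    ∃ P : T.Walk x (follow hbij x l), P.IsPath ∧ wcolors c P = l := by
  induction l using List.reverseRecOn with
  | nil => exact ⟨SimpleGraph.Walk.nil, SimpleGraph.Walk.IsPath.nil, rfl⟩
  | append_singleton l ω ih =>
    obtain ⟨P, hP, hcol⟩ := ih (hl.prefix (l.prefix_append [ω]))
    have hadj : T.Adj (follow hbij x l) (nbr hbij (follow hbij x l) ω) :=
      nbr_adj hbij _ ω
    have hx' : nbr hbij (follow hbij x l) ω ∉ P.support := by
      intro hmem
      have hdrop := hP.dropUntil hmem
      have hedge : (SimpleGraph.Walk.cons (T.adj_symm hadj) SimpleGraph.Walk.nil :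
          T.Walk (nbr hbij (follow hbij x l) ω) (follow hbij x l)).IsPath := by
        simp [SimpleGraph.Walk.cons_isPath_iff, hadj.ne']
      have huniq : P.dropUntil _ hmem =
          SimpleGraph.Walk.cons (T.adj_symm hadj) SimpleGraph.Walk.nil :=
        (hT.existsUnique_path _ _).unique hdrop hedge
      have hspec := P.take_spec hmem
      have hc2 : wcolors c P
          = wcolors c (P.takeUntil _ hmem) ++ [c (nbr hbij (follow hbij x l) ω) (follow hbij x l)] := by
        conv_lhs => rw [← hspec]
        rw [wcolors_append, huniq, wcolors_cons, wcolors_nil]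
      have hcv : c (nbr hbij (follow hbij x l) ω) (follow hbij x l) = ω := by
        rw [hsym]; exact c_nbr hbij _ _
      have hleq : l = wcolors c (P.takeUntil _ hmem) ++ [ω] := by
        conv_lhs => rw [← hcol]
        rw [hc2, hcv]
      rw [hleq, List.append_assoc] at hl
      have := (List.isChain_append.mp hl).2.1
      rw [show ([ω] ++ [ω] : List Ω) = [ω, ω] from rfl, List.isChain_pair] at this
      exact this rfl
    rw [follow_snoc]
    exact ⟨P.concat hadj, isPath_concat hP hadj hx',
      by rw [wcolors_concat, hcol, c_nbr hbij]⟩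

/-- The color code of a vertex, relative to base point `v₀`. -/
noncomputable def code (hT : T.IsTree) (c : V → V → Ω) (v₀ v : V) : List Ω :=
  wcolors c (pathB hT v₀ v)

lemma follow_code (v₀ v : V) : follow hbij v₀ (code hT c v₀ v) = v :=
  follow_wcolors hbij _

include hsym hbij in
lemma chain'_code (v₀ v : V) : List.Chain' (· ≠ ·) (code hT c v₀ v) :=
  chain'_wcolors hsym hbij _ (pathB_isPath hT v₀ v)

include hsym in
lemma code_follow (v₀ : V) {l : List Ω} (hl : List.Chain' (· ≠ ·) l) :
    code hT c v₀ (follow hbij v₀ l) = l := by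
  obtain ⟨P, hP, hc⟩ := exists_path_follow hT hsym hbij v₀ l hl
  rw [code, ← pathB_unique hT P hP, hc]

lemma code_self (v₀ : V) : code hT c v₀ v₀ = [] := by
  rw [code, ← pathB_unique hT SimpleGraph.Walk.nil SimpleGraph.Walk.IsPath.nil, wcolors_nil]

lemma adj_code (v₀ : V) {v w : V} (h : T.Adj v w) :
    code hT c v₀ w = code hT c v₀ v ++ [c v w] ∨
      code hT c v₀ v = code hT c v₀ w ++ [c w v] := by
  by_cases hw : w ∈ (pathB hT v₀ v).support
  · right
    have hdrop := (pathB_isPath hT v₀ v).dropUntil hw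
    have hedge : (SimpleGraph.Walk.cons h.symm SimpleGraph.Walk.nil : T.Walk w v).IsPath := by
      simp [SimpleGraph.Walk.cons_isPath_iff, h.ne']
    have huniq : (pathB hT v₀ v).dropUntil _ hw =
        SimpleGraph.Walk.cons h.symm SimpleGraph.Walk.nil :=
      (hT.existsUnique_path _ _).unique hdrop hedge
    have hspec := (pathB hT v₀ v).take_spec hw
    have htake : (pathB hT v₀ v).takeUntil _ hw = pathB hT v₀ w :=
      pathB_unique hT _ ((pathB_isPath hT v₀ v).takeUntil hw)
    calc code hT c v₀ v = wcolors c (pathB hT v₀ v) := rfl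
      _ = wcolors c (((pathB hT v₀ v).takeUntil _ hw).append ((pathB hT v₀ v).dropUntil _ hw)) := by
          rw [hspec]
      _ = code hT c v₀ w ++ [c w v] := by
          rw [wcolors_append, huniq, htake, wcolors_cons, wcolors_nil]; rfl
  · left
    have hP' : ((pathB hT v₀ v).concat h).IsPath :=
      isPath_concat (pathB_isPath hT v₀ v) h hw
    have := pathB_unique hT _ hP'
    rw [code, ← this, wcolors_concat]; rfl

end Codes

section Rot

variable {T : SimpleGraph V} {c : V → V → Ω}
variable (hT : T.IsTree)
variable (hsym : ∀ u w : V, c u w = c w u)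
variable (hbij : ∀ v : V, Set.BijOn (fun w => c v w) (T.neighborSet v) Set.univ)
variable (v₀ : V) (L : List Ω) (π : Equiv.Perm Ω) (f : Ω → Equiv.Perm Ω)

def stepT (π : Equiv.Perm Ω) (f : Ω → Equiv.Perm Ω) : List Ω → List Ω
  | [] => []
  | β :: t => π β :: t.map (f β)

noncomputable def tfm (L : List Ω) (π : Equiv.Perm Ω) (f : Ω → Equiv.Perm Ω)
    (l : List Ω) : List Ω :=
  if L <+: l then L ++ stepT π f (l.drop L.length) else l

lemma tfm_not_prefix {l : List Ω} (h : ¬ L <+: l) : tfm L π f l = l := if_neg h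

lemma tfm_self : tfm L π f L = L := by
  rw [tfm, if_pos List.prefix_rfl, List.drop_length]
  simp [stepT]

lemma tfm_extend (β : Ω) (t : List Ω) :
    tfm L π f (L ++ β :: t) = L ++ π β :: t.map (f β) := by
  rw [tfm, if_pos (List.prefix_append L _), List.drop_left]
  rfl

lemma tfm_snoc_A1 {l : List Ω} {ω : Ω} (h : ¬ L <+: l ++ [ω]) :
    tfm L π f (l ++ [ω]) = tfm L π f l ++ [ω] := by
  rw [tfm_not_prefix L π f h, tfm_not_prefix L π f (fun hp => h (hp.trans (l.prefix_append [ω])))]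

lemma tfm_snoc_A4 {l : List Ω} {ω : Ω} (h : L = l ++ [ω]) :
    tfm L π f (l ++ [ω]) = tfm L π f l ++ [ω] := by
  have h1 : ¬ L <+: l := by
    intro hp; have := hp.length_le; rw [h] at this; simp at this
  rw [← h, tfm_self, tfm_not_prefix L π f h1, h]

lemma tfm_snoc_A2 (ω : Ω) : tfm L π f (L ++ [ω]) = tfm L π f L ++ [π ω] := by
  rw [tfm_self, show (L ++ [ω] : List Ω) = L ++ ω :: [] from rfl, tfm_extend]
  rfl

lemma tfm_snoc_A3 (β ω : Ω) (t : List Ω) :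
    tfm L π f ((L ++ β :: t) ++ [ω]) = tfm L π f (L ++ β :: t) ++ [f β ω] := by
  rw [List.append_assoc, show ((β :: t) ++ [ω] : List Ω) = β :: (t ++ [ω]) from rfl,
    tfm_extend, tfm_extend, List.map_append]
  simp

lemma tfm_snoc (l : List Ω) (ω : Ω) :
    ∃ ω', tfm L π f (l ++ [ω]) = tfm L π f l ++ [ω'] := by
  by_cases h1 : L <+: l ++ [ω]
  · rcases List.prefix_concat_iff.mp h1 with he | hp
    · exact ⟨ω, tfm_snoc_A4 L π f he⟩
    · obtain ⟨r, rfl⟩ := hp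
      cases r with
      | nil => rw [List.append_nil]; exact ⟨π ω, tfm_snoc_A2 L π f ω⟩
      | cons β t => exact ⟨f β ω, tfm_snoc_A3 L π f β ω t⟩
  · exact ⟨ω, tfm_snoc_A1 L π f h1⟩

lemma tfm_chain' {a₀ : Ω} (hLa : L.getLast? = some a₀) (hπa : π a₀ = a₀)
    (hf : ∀ b, f b b = π b) {l : List Ω} (hl : List.Chain' (· ≠ ·) l) :
    List.Chain' (· ≠ ·) (tfm L π f l) := by
  by_cases hp : L <+: l
  · obtain ⟨r, rfl⟩ := hp
    cases r with
    | nil => rw [List.append_nil] at hl ⊢; rw [tfm_self]; exact hl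
    | cons β t =>
      rw [tfm_extend]
      have hjun : a₀ ≠ β := by
        have := (List.isChain_append.mp hl).2.2
        exact this a₀ hLa β rfl
      refine List.IsChain.append hl.left_of_append ?_ ?_
      · have ht : List.Chain' (· ≠ ·) (β :: t) := hl.right_of_append
        refine List.isChain_cons.mpr ⟨?_, ?_⟩
        · intro y hy
          rw [List.head?_map] at hy
          rw [Option.mem_def] at hy
          rcases Option.map_eq_some_iff.mp hy with ⟨z, hz, rfl⟩
          have hz' : β ≠ z := ht.rel_head? hz
          intro hEq
          apply hz'
          apply (f β).injective
          rw [hf β]; exact hEq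
        · have := ht.tail
          exact (List.isChain_map (f β)).mpr
            (List.IsChain.imp (fun a b hab hEq => hab ((f β).injective hEq)) this)
      · intro x hx y hy
        rw [hLa, Option.mem_def, Option.some.injEq] at hx
        simp only [List.head?_cons, Option.mem_def, Option.some.injEq] at hy
        subst hx; subst hy
        intro hEq
        exact hjun (π.injective (hπa.trans hEq))
  · rw [tfm_not_prefix L π f hp]; exact hl

lemma tfm_tfm (π₂ : Equiv.Perm Ω) (f₂ : Ω → Equiv.Perm Ω)
    (h1 : ∀ b, π₂ (π b) = b) (h2 : ∀ b, f₂ (π b) = (f b)⁻¹) (l : List Ω) :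
    tfm L π₂ f₂ (tfm L π f l) = l := by
  by_cases hp : L <+: l
  · obtain ⟨r, rfl⟩ := hp
    cases r with
    | nil => rw [List.append_nil, tfm_self, tfm_self]
    | cons β t =>
      rw [tfm_extend, tfm_extend, h1, List.map_map]
      have hfun : (⇑(f₂ (π β)) ∘ ⇑(f β)) = id := by
        funext x
        simp [h2 β]
      rw [hfun, List.map_id]
  · rw [tfm_not_prefix L π f hp, tfm_not_prefix L π₂ f₂ hp]

/-- The rotation map determined by `L`, `π`, `f`. -/
noncomputable def rotF (hT : T.IsTree)
    (hbij : ∀ v : V, Set.BijOn (fun w => c v w) (T.neighborSet v) Set.univ)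
    (v₀ : V) (L : List Ω) (π : Equiv.Perm Ω) (f : Ω → Equiv.Perm Ω) (v : V) : V :=
  follow hbij v₀ (tfm L π f (code hT c v₀ v))

include hsym in
lemma rotF_rotF {a₀ : Ω} (hLa : L.getLast? = some a₀) (hπa : π a₀ = a₀)
    (hf : ∀ b, f b b = π b) (π₂ : Equiv.Perm Ω) (f₂ : Ω → Equiv.Perm Ω)
    (h1 : ∀ b, π₂ (π b) = b) (h2 : ∀ b, f₂ (π b) = (f b)⁻¹) (v : V) :
    rotF hT hbij v₀ L π₂ f₂ (rotF hT hbij v₀ L π f v) = v := by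
  rw [rotF, rotF,
    code_follow hT hsym hbij v₀ (tfm_chain' L π f hLa hπa hf (chain'_code hT hsym hbij v₀ v)),
    tfm_tfm L π f π₂ f₂ h1 h2, follow_code hT hbij v₀ v]

/-- The rotation as a permutation. -/
noncomputable def rotPerm {a₀ : Ω} (hLa : L.getLast? = some a₀) (hπa : π a₀ = a₀)
    (hf : ∀ b, f b b = π b) : Equiv.Perm V where
  toFun := rotF hT hbij v₀ L π f
  invFun := rotF hT hbij v₀ L π⁻¹ (fun b => (f (π⁻¹ b))⁻¹)
  left_inv := by
    intro v
    exact rotF_rotF hT hsym hbij v₀ L π f hLa hπa hf π⁻¹ _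
      (fun b => π.inv_apply_self b)
      (fun b => by rw [Equiv.Perm.inv_apply_self]) v
  right_inv := by
    intro v
    have hπa' : π⁻¹ a₀ = a₀ := by
      conv_lhs => rw [← hπa]
      rw [Equiv.Perm.inv_apply_self]
    have hf' : ∀ b, (f (π⁻¹ b))⁻¹ b = π⁻¹ b := by
      intro b
      have hb := hf (π⁻¹ b)
      rw [Equiv.Perm.apply_inv_self] at hb
      rw [Equiv.Perm.inv_def, Equiv.symm_apply_eq]
      exact hb.symm
    exact rotF_rotF hT hsym hbij v₀ L π⁻¹ _ hLa hπa' hf' π f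
      (fun b => π.apply_inv_self b)
      (fun b => by simp) v

lemma rotPerm_apply {a₀ : Ω} (hLa : L.getLast? = some a₀) (hπa : π a₀ = a₀)
    (hf : ∀ b, f b b = π b) (v : V) :
    rotPerm hT hsym hbij v₀ L π f hLa hπa hf v = rotF hT hbij v₀ L π f v := rfl

lemma rotPerm_inv_apply {a₀ : Ω} (hLa : L.getLast? = some a₀) (hπa : π a₀ = a₀)
    (hf : ∀ b, f b b = π b) (v : V) :
    (rotPerm hT hsym hbij v₀ L π f hLa hπa hf)⁻¹ v
      = rotF hT hbij v₀ L π⁻¹ (fun b => (f (π⁻¹ b))⁻¹) v := rfl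

lemma rotF_fix {v : V} (h : ¬ L <+: code hT c v₀ v) :
    rotF hT hbij v₀ L π f v = v := by
  rw [rotF, tfm_not_prefix L π f h, follow_code hT hbij v₀ v]

lemma rotF_snoc {v w : V} (hc : code hT c v₀ w = code hT c v₀ v ++ [c v w]) {ω' : Ω}
    (hsn : tfm L π f (code hT c v₀ v ++ [c v w]) = tfm L π f (code hT c v₀ v) ++ [ω']) :
    rotF hT hbij v₀ L π f w = nbr hbij (rotF hT hbij v₀ L π f v) ω' := by
  rw [rotF, hc, hsn, follow_snoc]
  rfl

lemma rotF_color {v w : V} (hc : code hT c v₀ w = code hT c v₀ v ++ [c v w]) {ω' : Ω}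
    (hsn : tfm L π f (code hT c v₀ v ++ [c v w]) = tfm L π f (code hT c v₀ v) ++ [ω']) :
    c (rotF hT hbij v₀ L π f v) (rotF hT hbij v₀ L π f w) = ω' := by
  rw [rotF_snoc hT hbij v₀ L π f hc hsn, c_nbr hbij]

include hsym in
lemma rotF_adj {v w : V} (h : T.Adj v w) :
    T.Adj (rotF hT hbij v₀ L π f v) (rotF hT hbij v₀ L π f w) := by
  rcases adj_code hT v₀ h with hc | hc
  · obtain ⟨ω', hsn⟩ := tfm_snoc L π f (code hT c v₀ v) (c v w)
    rw [rotF_snoc hT hbij v₀ L π f hc hsn]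
    exact nbr_adj hbij _ _
  · obtain ⟨ω', hsn⟩ := tfm_snoc L π f (code hT c v₀ w) (c w v)
    rw [rotF_snoc hT hbij v₀ L π f hc hsn]
    exact (nbr_adj hbij _ _).symm

lemma rotPerm_aut {a₀ : Ω} (hLa : L.getLast? = some a₀) (hπa : π a₀ = a₀)
    (hf : ∀ b, f b b = π b) :
    IsGraphAut T (rotPerm hT hsym hbij v₀ L π f hLa hπa hf) := by
  intro x y
  constructor
  · intro h
    have h2 := rotF_adj hT hsym hbij v₀ L π⁻¹ (fun b => (f (π⁻¹ b))⁻¹) h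
    rwa [show rotF hT hbij v₀ L π⁻¹ (fun b => (f (π⁻¹ b))⁻¹)
          (rotPerm hT hsym hbij v₀ L π f hLa hπa hf x) = x from
        (rotPerm hT hsym hbij v₀ L π f hLa hπa hf).left_inv x,
      show rotF hT hbij v₀ L π⁻¹ (fun b => (f (π⁻¹ b))⁻¹)
          (rotPerm hT hsym hbij v₀ L π f hLa hπa hf y) = y from
        (rotPerm hT hsym hbij v₀ L π f hLa hπa hf).left_inv y] at h2
  · intro h
    exact rotF_adj hT hsym hbij v₀ L π f h

include hsym hbij in
lemma sigma_det (σ : Equiv.Perm V → V → Equiv.Perm Ω)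
    (hσ : ∀ g : Equiv.Perm V, IsGraphAut T g →
      ∀ v w : V, T.Adj v w → σ g v (c v w) = c (g v) (g w))
    (g : Equiv.Perm V) (hg : IsGraphAut T g) (v : V) (τ : Equiv.Perm Ω)
    (h : ∀ w, T.Adj v w → c (g v) (g w) = τ (c v w)) : σ g v = τ := by
  apply Equiv.ext; intro x
  obtain ⟨w, hw, hcw⟩ := (hbij v).2.2 (Set.mem_univ x)
  have hadj : T.Adj v w := hw
  have hcw' : c v w = x := hcw
  rw [← hcw', hσ g hg v w hadj, h w hadj]

end Rot

section Sigma

variable {T : SimpleGraph V} {c : V → V → Ω}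
variable (hT : T.IsTree)
variable (hsym : ∀ u w : V, c u w = c w u)
variable (hbij : ∀ v : V, Set.BijOn (fun w => c v w) (T.neighborSet v) Set.univ)
variable (v₀ : V) (L : List Ω) (π : Equiv.Perm Ω) (f : Ω → Equiv.Perm Ω)
variable (σ : Equiv.Perm V → V → Equiv.Perm Ω)
variable (hσ : ∀ g : Equiv.Perm V, IsGraphAut T g →
      ∀ v w : V, T.Adj v w → σ g v (c v w) = c (g v) (g w))
variable {a₀ : Ω} (hLa : L.getLast? = some a₀) (hπa : π a₀ = a₀)
    (hf : ∀ b, f b b = π b)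

include hσ in
lemma sigma_rot_not_prefix {v : V} (hnp : ¬ L <+: code hT c v₀ v) :
    σ (rotPerm hT hsym hbij v₀ L π f hLa hπa hf) v = 1 := by
  apply sigma_det hsym hbij σ hσ _ (rotPerm_aut hT hsym hbij v₀ L π f hLa hπa hf) v 1
  intro w hadj
  rw [Equiv.Perm.one_apply]
  rcases adj_code hT v₀ hadj with hc | hc
  · have hsn : tfm L π f (code hT c v₀ v ++ [c v w])
        = tfm L π f (code hT c v₀ v) ++ [c v w] := by
      by_cases h1 : L <+: code hT c v₀ v ++ [c v w]
      · rcases List.prefix_concat_iff.mp h1 with he | hp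
        · exact tfm_snoc_A4 L π f he
        · exact absurd hp hnp
      · exact tfm_snoc_A1 L π f h1
    exact rotF_color hT hbij v₀ L π f hc hsn
  · have hnp2 : ¬ L <+: code hT c v₀ w := by
      intro hp
      exact hnp (by rw [hc]; exact hp.trans (List.prefix_append _ _))
    have hsn : tfm L π f (code hT c v₀ w ++ [c w v])
        = tfm L π f (code hT c v₀ w) ++ [c w v] := by
      by_cases h1 : L <+: code hT c v₀ w ++ [c w v]
      · rcases List.prefix_concat_iff.mp h1 with he | hp
        · exfalso
          apply hnp
          rw [he, ← hc]
        · exact absurd hp hnp2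
      · exact tfm_snoc_A1 L π f h1
    have hcc := rotF_color hT hbij v₀ L π f (v := w) (w := v) hc hsn
    show c (rotF hT hbij v₀ L π f v) (rotF hT hbij v₀ L π f w) = c v w
    rw [hsym (rotF hT hbij v₀ L π f v), hcc, ← hsym v w]

include hσ in
lemma sigma_rot_self {v : V} (hv : code hT c v₀ v = L) :
    σ (rotPerm hT hsym hbij v₀ L π f hLa hπa hf) v = π := by
  apply sigma_det hsym hbij σ hσ _ (rotPerm_aut hT hsym hbij v₀ L π f hLa hπa hf) v π
  intro w hadj
  rcases adj_code hT v₀ hadj with hc | hc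
  · have hsn : tfm L π f (code hT c v₀ v ++ [c v w])
        = tfm L π f (code hT c v₀ v) ++ [π (c v w)] := by
      rw [hv]; exact tfm_snoc_A2 L π f (c v w)
    exact rotF_color hT hbij v₀ L π f hc hsn
  · have hLw : L = code hT c v₀ w ++ [c w v] := by rw [← hv]; exact hc
    have hsn := tfm_snoc_A4 L π f hLw
    have hcc := rotF_color hT hbij v₀ L π f (v := w) (w := v) hc hsn
    have hwa : c w v = a₀ := by
      have h2 := hLa
      rw [hLw, List.getLast?_concat] at h2
      exact Option.some_injective _ h2
    show c (rotF hT hbij v₀ L π f v) (rotF hT hbij v₀ L π f w) = π (c v w)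
    rw [hsym (rotF hT hbij v₀ L π f v), hcc, hsym v w, hwa, hπa]

include hσ in
lemma sigma_rot_below {v : V} (β : Ω) (t : List Ω) (hv : code hT c v₀ v = L ++ β :: t) :
    σ (rotPerm hT hsym hbij v₀ L π f hLa hπa hf) v = f β := by
  apply sigma_det hsym hbij σ hσ _ (rotPerm_aut hT hsym hbij v₀ L π f hLa hπa hf) v (f β)
  intro w hadj
  rcases adj_code hT v₀ hadj with hc | hc
  · have hsn : tfm L π f (code hT c v₀ v ++ [c v w])
        = tfm L π f (code hT c v₀ v) ++ [f β (c v w)] := by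
      rw [hv]; exact tfm_snoc_A3 L π f β (c v w) t
    exact rotF_color hT hbij v₀ L π f hc hsn
  · rcases t.eq_nil_or_concat with rfl | ⟨t', a, rfl⟩
    · have heq : code hT c v₀ w ++ [c w v] = L ++ [β] := by rw [← hc]; exact hv
      have hlen : (code hT c v₀ w).length = L.length := by
        have h2 := congrArg List.length heq
        simp only [List.length_append, List.length_singleton] at h2
        omega
      obtain ⟨hw, hcwv⟩ := List.append_inj heq hlen
      have hcwv' : c w v = β := by
        simpa using hcwv
      have hsn : tfm L π f (code hT c v₀ w ++ [c w v])
          = tfm L π f (code hT c v₀ w) ++ [π (c w v)] := by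
        rw [hw]; exact tfm_snoc_A2 L π f (c w v)
      have hcc := rotF_color hT hbij v₀ L π f (v := w) (w := v) hc hsn
      show c (rotF hT hbij v₀ L π f v) (rotF hT hbij v₀ L π f w) = f β (c v w)
      rw [hsym (rotF hT hbij v₀ L π f v), hcc, hsym v w, hcwv', hf β]
    · have hv2 : code hT c v₀ v = (L ++ β :: t') ++ [a] := by
        rw [hv]
        simp [List.concat_eq_append]
      have heq : code hT c v₀ w ++ [c w v] = (L ++ β :: t') ++ [a] := hc.symm.trans hv2
      obtain ⟨hw, hcwv⟩ := List.append_inj' heq rfl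
      have hsn : tfm L π f (code hT c v₀ w ++ [c w v])
          = tfm L π f (code hT c v₀ w) ++ [f β (c w v)] := by
        rw [hw]; exact tfm_snoc_A3 L π f β (c w v) t'
      have hcc := rotF_color hT hbij v₀ L π f (v := w) (w := v) hc hsn
      show c (rotF hT hbij v₀ L π f v) (rotF hT hbij v₀ L π f w) = f β (c v w)
      rw [hsym (rotF hT hbij v₀ L π f v), hcc, hsym v w]

include hσ in
lemma rotPerm_memGFF (F F' : Subgroup (Equiv.Perm Ω)) (hle : F ≤ F')
    (hπF' : π ∈ F') (hfF : ∀ b, f b ∈ F) :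
    MemGFF T σ F F' (rotPerm hT hsym hbij v₀ L π f hLa hπa hf) := by
  refine ⟨rotPerm_aut hT hsym hbij v₀ L π f hLa hπa hf, ?_, ?_⟩
  · intro v
    by_cases hp : L <+: code hT c v₀ v
    · obtain ⟨r, hr⟩ := hp
      cases r with
      | nil =>
        rw [List.append_nil] at hr
        rw [sigma_rot_self hT hsym hbij v₀ L π f σ hσ hLa hπa hf hr.symm]
        exact hπF'
      | cons β t =>
        rw [sigma_rot_below hT hsym hbij v₀ L π f σ hσ hLa hπa hf β t hr.symm]
        exact hle (hfF β)
    · rw [sigma_rot_not_prefix hT hsym hbij v₀ L π f σ hσ hLa hπa hf hp]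
      exact one_mem F'
  · apply Set.Finite.subset (Set.finite_singleton (follow hbij v₀ L))
    intro v hv
    simp only [Set.mem_setOf_eq] at hv
    simp only [Set.mem_singleton_iff]
    by_cases hp : L <+: code hT c v₀ v
    · obtain ⟨r, hr⟩ := hp
      cases r with
      | nil =>
        rw [List.append_nil] at hr
        rw [← follow_code hT hbij v₀ v, ← hr]
      | cons β t =>
        rw [sigma_rot_below hT hsym hbij v₀ L π f σ hσ hLa hπa hf β t hr.symm] at hv
        exact absurd (hfF β) hv
    · rw [sigma_rot_not_prefix hT hsym hbij v₀ L π f σ hσ hLa hπa hf hp] at hv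
      exact absurd (one_mem F) hv

end Sigma

section Transport

variable {T : SimpleGraph V} {c : V → V → Ω}
variable (hT : T.IsTree)
variable (hsym : ∀ u w : V, c u w = c w u)
variable (hbij : ∀ v : V, Set.BijOn (fun w => c v w) (T.neighborSet v) Set.univ)
variable (v₀ : V)

include hsym hbij in
lemma transport (g : Equiv.Perm V) (hg : IsGraphAut T g)
    {p u u' : V} (hpu : T.Adj p u) (hgu : g u' = u) (hgp : g p = p)
    (hcu : code hT c v₀ u = code hT c v₀ p ++ [c p u])
    (hcu' : code hT c v₀ u' = code hT c v₀ p ++ [c p u'])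
    (hab : c p u ≠ c p u')
    {v : V} {m : List Ω} (hm : m ≠ []) (hcv : code hT c v₀ v = code hT c v₀ u' ++ m) :
    ∃ m', code hT c v₀ (g v) = code hT c v₀ u ++ m' := by
  have hvchain : List.Chain' (· ≠ ·) (code hT c v₀ u' ++ m) := by
    rw [← hcv]; exact chain'_code hT hsym hbij v₀ v
  have hmchain : List.Chain' (· ≠ ·) m := hvchain.right_of_append
  have hfv : follow hbij u' m = v := by
    calc follow hbij u' m
        = follow hbij (follow hbij v₀ (code hT c v₀ u')) m := by
          rw [follow_code hT hbij v₀ u']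
      _ = follow hbij v₀ (code hT c v₀ u' ++ m) := (follow_append hbij v₀ _ m).symm
      _ = follow hbij v₀ (code hT c v₀ v) := by rw [hcv]
      _ = v := follow_code hT hbij v₀ v
  have hPv : ∃ P : T.Walk u' v, P.IsPath ∧ wcolors c P = m := by
    rw [← hfv]
    exact exists_path_follow hT hsym hbij u' m hmchain
  obtain ⟨P, hP, hPc⟩ := hPv
  cases P with
  | nil =>
    rw [wcolors_nil] at hPc
    exact absurd hPc.symm hm
  | @cons _ w₁ _ h1 P2 =>
    have hgadj : ∀ {a b : V}, T.Adj a b → T.Adj (g a) (g b) := fun hab2 => (hg _ _).mpr hab2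
    let gh : T →g T := ⟨g, fun hab2 => hgadj hab2⟩
    have hmap : ((SimpleGraph.Walk.cons h1 P2).map gh).IsPath :=
      SimpleGraph.Walk.map_isPath_of_injective (fun a b hab2 => g.injective hab2) hP
    set m' := wcolors c ((SimpleGraph.Walk.cons h1 P2).map gh) with hm'def
    have hm'chain : List.Chain' (· ≠ ·) m' := chain'_wcolors hsym hbij _ hmap
    have hend : follow hbij (g u') m' = g v := by
      have h3 := follow_wcolors hbij ((SimpleGraph.Walk.cons h1 P2).map gh)
      rw [← hm'def] at h3
      exact h3
    have hm'head : m'.head? = some (c (g u') (g w₁)) := by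
      rw [hm'def, SimpleGraph.Walk.map_cons, wcolors_cons]
      rfl
    have hmhead : m.head? = some (c u' w₁) := by
      rw [← hPc, wcolors_cons]
      rfl
    have hjun := (List.isChain_append.mp hvchain).2.2
    have hlastu' : (code hT c v₀ u').getLast? = some (c p u') := by
      rw [hcu']; exact List.getLast?_concat
    have hw₁ : w₁ ≠ p := by
      intro he
      apply hjun (c p u') hlastu' (c u' w₁) hmhead
      rw [he, hsym u' p]
    have hgw₁ : g w₁ ≠ p := by
      intro he
      apply hw₁
      apply g.injective
      rw [he, hgp]
    have hadj_u : T.Adj u (g w₁) := by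
      have h3 := hgadj h1
      rwa [hgu] at h3
    have hjnew : c p u ≠ c u (g w₁) := by
      intro he
      apply hgw₁
      have hpu2 : T.Adj u p := hpu.symm
      have h3 : p = g w₁ := (hbij u).2.1 hpu2 hadj_u (by show c u p = c u (g w₁); rw [← he]; exact hsym u p)
      exact h3.symm
    refine ⟨m', ?_⟩
    have hchainfull : List.Chain' (· ≠ ·) (code hT c v₀ u ++ m') := by
      refine List.IsChain.append (chain'_code hT hsym hbij v₀ u) hm'chain ?_
      intro x hx y hy
      rw [hcu, List.getLast?_concat, Option.mem_def, Option.some.injEq] at hx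
      rw [hm'head, Option.mem_def, Option.some.injEq] at hy
      subst hx; subst hy
      rw [hgu]
      exact hjnew
    have hgv : g v = follow hbij v₀ (code hT c v₀ u ++ m') := by
      rw [follow_append hbij v₀, follow_code hT hbij v₀ u, ← hgu, hend]
    rw [hgv, code_follow hT hsym hbij v₀ hchainfull]

end Transport

/-- Let `F ≨ F' ≤ Sym(Ω)` (with `F'` preserving the `F`-orbits) and
let `K(F,F')` be the stabilizer of a vertex `v₀` of the `d`-regular tree `T_d`
(`d = |Ω| ≥ 3`) in `G(F,F')`.  Then `K(F,F')` is an ICC group: every non-trivial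
element has an infinite conjugacy class in `K(F,F')`. -/
theorem KFF_is_ICC {V Ω : Type*} (T : SimpleGraph V)
    (hT : T.IsTree) (hd : 3 ≤ Nat.card Ω) (c : V → V → Ω)
    (hsym : ∀ u w : V, c u w = c w u)
    (hbij : ∀ v : V, Set.BijOn (fun w => c v w) (T.neighborSet v) Set.univ)
    (σ : Equiv.Perm V → V → Equiv.Perm Ω)
    (hσ : ∀ g : Equiv.Perm V, IsGraphAut T g →
      ∀ v w : V, T.Adj v w → σ g v (c v w) = c (g v) (g w))
    (F F' : Subgroup (Equiv.Perm Ω)) (hle : F ≤ F') (hne : F ≠ F')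
    (horb : ∀ g ∈ F', ∀ a : Ω, ∃ f ∈ F, g a = f a)
    (v₀ : V) :
    ∀ γ : Equiv.Perm V, MemGFF T σ F F' γ → γ v₀ = v₀ → γ ≠ 1 →
      {x : Equiv.Perm V |
        ∃ k : Equiv.Perm V, MemGFF T σ F F' k ∧ k v₀ = v₀ ∧ x = k * γ * k⁻¹}.Infinite := by
  intro γ hγmem hγv₀ hγne1
  obtain ⟨hγaut, hγF', hγfin⟩ := hγmem
  -- basic facts about Ω
  have hΩpos : 0 < Nat.card Ω := by omega
  obtain ⟨hΩne, hΩfin⟩ := Nat.card_pos_iff.mp hΩpos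
  have hthree : ∀ x y : Ω, ∃ z : Ω, z ≠ x ∧ z ≠ y := by
    intro x y
    have hft : Fintype Ω := Fintype.ofFinite Ω
    by_contra hcon
    push_neg at hcon
    have hsub : (Finset.univ : Finset Ω) ⊆ {x, y} := by
      intro z _
      rcases eq_or_ne z x with rfl | hzx
      · simp
      · simp [hcon z hzx]
    have h1 := Finset.card_le_card hsub
    have h2 : ({x, y} : Finset Ω).card ≤ 2 := by
      apply le_trans (Finset.card_insert_le _ _)
      simp
    rw [Finset.card_univ] at h1
    rw [Nat.card_eq_fintype_card] at hd
    omega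
  -- choice of π with a fixed point a₀
  obtain ⟨π₀, hπ₀F', hπ₀F⟩ := SetLike.exists_of_lt (lt_of_le_of_ne hle hne)
  obtain ⟨a₀⟩ := hΩne
  obtain ⟨f₀, hf₀F, hf₀⟩ := horb π₀ hπ₀F' a₀
  obtain ⟨π, hπdef⟩ : ∃ π : Equiv.Perm Ω, π = f₀⁻¹ * π₀ := ⟨_, rfl⟩
  have hπF' : π ∈ F' := by rw [hπdef]; exact mul_mem (inv_mem (hle hf₀F)) hπ₀F'
  have hπa : π a₀ = a₀ := by
    rw [hπdef, Equiv.Perm.mul_apply, hf₀, Equiv.Perm.inv_apply_self]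
  have hπne : π ≠ 1 := by
    intro h1
    apply hπ₀F
    have h2 : π₀ = f₀ := by
      rw [hπdef] at h1
      exact (inv_mul_eq_one.mp h1).symm
    rw [h2]; exact hf₀F
  obtain ⟨β, hβ⟩ : ∃ b, π b ≠ b := by
    by_contra hcon
    push_neg at hcon
    exact hπne (Equiv.ext hcon)
  have hβa₀ : β ≠ a₀ := by
    intro h; rw [h, hπa] at hβ; exact hβ rfl
  -- local permutations from F agreeing with π
  choose ff hffF hffval using fun b => horb π hπF' b
  have hffβ : ∀ b, ff b b = π b := fun b => (hffval b).symm
  -- minimal moved vertex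
  have hexmoved : ∃ w : V, γ w ≠ w := by
    by_contra hcon
    push_neg at hcon
    apply hγne1
    apply Equiv.ext
    intro x
    simpa using hcon x
  have hexm : ∃ n : ℕ, ∃ w : V, γ w ≠ w ∧ (code hT c v₀ w).length = n :=
    ⟨_, hexmoved.choose, hexmoved.choose_spec, rfl⟩
  obtain ⟨u, hu_mv, hu_len⟩ := Nat.find_spec hexm
  have h_min : ∀ w : V, (code hT c v₀ w).length < Nat.find hexm → γ w = w := by
    intro w hw
    by_contra hmv
    exact Nat.find_min hexm hw ⟨w, hmv, rfl⟩
  have hu_ne : u ≠ v₀ := by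
    intro h; rw [h, hγv₀] at hu_mv; exact hu_mv rfl
  have hcu_ne : code hT c v₀ u ≠ [] := by
    intro h
    apply hu_ne
    have h2 := follow_code hT hbij v₀ u
    rw [h, follow_nil] at h2
    exact h2.symm
  obtain ⟨p, hpdef⟩ : ∃ p : V, p = follow hbij v₀ (code hT c v₀ u).dropLast := ⟨_, rfl⟩
  have hcp : code hT c v₀ p = (code hT c v₀ u).dropLast := by
    rw [hpdef]
    exact code_follow hT hsym hbij v₀
      ((chain'_code hT hsym hbij v₀ u).prefix (code hT c v₀ u).dropLast_prefix)
  have hfu : nbr hbij p ((code hT c v₀ u).getLast hcu_ne) = u := by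
    have h2 : follow hbij v₀
        ((code hT c v₀ u).dropLast ++ [(code hT c v₀ u).getLast hcu_ne]) = u := by
      rw [List.dropLast_append_getLast hcu_ne]
      exact follow_code hT hbij v₀ u
    rw [follow_snoc, ← hpdef] at h2
    exact h2
  have hadj_pu : T.Adj p u := by rw [← hfu]; exact nbr_adj hbij _ _
  have ha_def : c p u = (code hT c v₀ u).getLast hcu_ne := by
    conv_lhs => rw [← hfu]
    rw [c_nbr hbij]
  have hcu : code hT c v₀ u = code hT c v₀ p ++ [c p u] := by
    rw [hcp, ha_def, List.dropLast_append_getLast hcu_ne]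
  have hplen : (code hT c v₀ p).length < Nat.find hexm := by
    rw [hcp, List.length_dropLast, hu_len]
    have h3 : 0 < Nat.find hexm := by
      rw [← hu_len]
      exact List.length_pos_iff.mpr hcu_ne
    omega
  have hγp : γ p = p := h_min p hplen
  have hu'_adj : T.Adj p (γ u) := by
    have h2 := (hγaut p u).mpr hadj_pu
    rwa [hγp] at h2
  have hcu' : code hT c v₀ (γ u) = code hT c v₀ p ++ [c p (γ u)] := by
    rcases adj_code hT v₀ hu'_adj with h | h
    · exact h
    · exfalso
      have hlen2 : (code hT c v₀ (γ u)).length + 1 = (code hT c v₀ p).length := by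
        rw [h]; simp
      have hfix2 := h_min (γ u) (by omega)
      exact hu_mv (γ.injective hfix2)
  have hab : c p u ≠ c p (γ u) := by
    intro h
    exact hu_mv ((hbij p).2.1 hu'_adj hadj_pu h.symm)
  -- the auxiliary colors
  obtain ⟨d₀, hd₀a, hd₀b⟩ := hthree a₀ (c p (γ u))
  obtain ⟨d₁, hd₁a, hd₁d₀⟩ := hthree a₀ d₀
  obtain ⟨δ, hδdef⟩ : ∃ δ : ℕ → Ω, δ = fun m => if m % 2 = 0 then d₀ else d₁ := ⟨_, rfl⟩
  have hδa : ∀ m, δ m ≠ a₀ := by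
    intro m; rw [hδdef]; dsimp only; split <;> assumption
  have hδsucc : ∀ m, δ m ≠ δ (m + 1) := by
    intro m; rw [hδdef]; dsimp only
    rcases Nat.mod_two_eq_zero_or_one m with h | h
    · rw [if_pos h, if_neg (by omega)]
      exact fun hh => hd₁d₀ hh.symm
    · rw [if_neg (by omega), if_pos (by omega)]
      exact hd₁d₀
  have hδ0 : δ 0 = d₀ := by rw [hδdef]; simp
  -- the lists
  obtain ⟨A, hAdef⟩ : ∃ A : ℕ → List Ω,
      A = fun j => code hT c v₀ (γ u) ++ (List.range (j + 1)).map δ := ⟨_, rfl⟩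
  obtain ⟨LL, hLLdef⟩ : ∃ LL : ℕ → List Ω, LL = fun j => A j ++ [a₀] := ⟨_, rfl⟩
  have hAchain : ∀ j, List.Chain' (· ≠ ·) (A j) := by
    intro j
    rw [hAdef]; dsimp only
    refine List.IsChain.append (chain'_code hT hsym hbij v₀ (γ u)) ?_ ?_
    · rw [List.isChain_map]
      exact (List.isChain_range_succ _ j).mpr (fun m _ => hδsucc m)
    · intro x hx y hy
      rw [hcu', List.getLast?_concat, Option.mem_def, Option.some.injEq] at hx
      rw [List.head?_map, List.range_succ_eq_map, List.head?_cons] at hy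
      simp only [Option.map_some, Option.mem_def, Option.some.injEq] at hy
      subst hx; subst hy
      rw [hδ0]
      exact fun hh => hd₀b hh.symm
  have hAlast : ∀ j, (A j).getLast? = some (δ j) := by
    intro j
    rw [hAdef]; dsimp only
    rw [List.range_succ, List.map_append, List.map_singleton, ← List.append_assoc,
      List.getLast?_concat]
  have hLLchain : ∀ j, List.Chain' (· ≠ ·) (LL j) := by
    intro j
    rw [hLLdef]; dsimp only
    refine List.IsChain.append (hAchain j) (List.isChain_singleton a₀) ?_
    intro x hx y hy
    rw [hAlast j, Option.mem_def, Option.some.injEq] at hx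
    simp only [List.head?_cons, Option.mem_def, Option.some.injEq] at hy
    subst hx; subst hy
    exact hδa j
  have hLLlast : ∀ j, (LL j).getLast? = some a₀ := by
    intro j; rw [hLLdef]; exact List.getLast?_concat
  -- the rotations
  obtain ⟨k, hkdef⟩ : ∃ k : ℕ → Equiv.Perm V,
      k = fun j => rotPerm hT hsym hbij v₀ (LL j) π ff (hLLlast j) hπa hffβ := ⟨_, rfl⟩
  have hkapply : ∀ j v, k j v = rotF hT hbij v₀ (LL j) π ff v := by
    intro j v; rw [hkdef]
    rfl
  have hkinv : ∀ j v, (k j)⁻¹ v = rotF hT hbij v₀ (LL j) π⁻¹ (fun b => (ff (π⁻¹ b))⁻¹) v := by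
    intro j v; rw [hkdef]
    rfl
  have hkmem : ∀ j, MemGFF T σ F F' (k j) := by
    intro j; rw [hkdef]
    exact rotPerm_memGFF hT hsym hbij v₀ (LL j) π ff σ hσ (hLLlast j) hπa hffβ F F' hle hπF' hffF
  have hLLne : ∀ j, LL j ≠ [] := by
    intro j; rw [hLLdef]; simp
  have hkv₀ : ∀ j, k j v₀ = v₀ := by
    intro j
    rw [hkapply]
    apply rotF_fix
    rw [code_self hT v₀]
    intro hpre
    exact hLLne j (List.prefix_nil.mp hpre)
  -- the vertices q j and s j
  obtain ⟨q, hqdef⟩ : ∃ q : ℕ → V, q = fun j => follow hbij v₀ (LL j) := ⟨_, rfl⟩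
  have hcq : ∀ j, code hT c v₀ (q j) = LL j := by
    intro j; rw [hqdef]; exact code_follow hT hsym hbij v₀ (hLLchain j)
  obtain ⟨s, hsdef⟩ : ∃ s : ℕ → V, s = fun j => nbr hbij (q j) β := ⟨_, rfl⟩
  have hqs_adj : ∀ j, T.Adj (q j) (s j) := by
    intro j; rw [hsdef]; exact nbr_adj hbij _ _
  have hcqs : ∀ j, c (q j) (s j) = β := by
    intro j; rw [hsdef]; exact c_nbr hbij _ _
  have hcs : ∀ j, code hT c v₀ (s j) = LL j ++ [β] := by
    intro j
    rcases adj_code hT v₀ (hqs_adj j) with h | h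
    · rw [h, hcq, hcqs]
    · exfalso
      have h2 : (code hT c v₀ (q j)).getLast? = some (c (s j) (q j)) := by
        rw [h]; exact List.getLast?_concat
      rw [hcq j, hLLlast j] at h2
      have h3 : a₀ = c (s j) (q j) := Option.some_injective _ h2
      apply hβa₀
      rw [← hcqs j, hsym (q j) (s j), ← h3]
  -- transport
  have hγinv_aut : IsGraphAut T γ⁻¹ := by
    intro x y
    have h2 := (hγaut (γ⁻¹ x) (γ⁻¹ y)).symm
    rwa [Equiv.Perm.apply_inv_self, Equiv.Perm.apply_inv_self] at h2
  have hcsplit : ∀ j, code hT c v₀ (s j)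
      = code hT c v₀ (γ u) ++ ((List.range (j + 1)).map δ ++ [a₀, β]) := by
    intro j
    rw [hcs j, hLLdef, hAdef]
    dsimp only
    simp [List.append_assoc]
  have hγinvp : γ⁻¹ p = p := by
    conv_lhs => rw [← hγp]
    exact γ.inv_apply_self p
  have htrans : ∀ j, ∃ m', code hT c v₀ (γ⁻¹ (s j)) = code hT c v₀ u ++ m' := by
    intro j
    refine transport hT hsym hbij v₀ γ⁻¹ hγinv_aut hadj_pu (γ.inv_apply_self u) hγinvp
      hcu hcu' hab ?_ (hcsplit j)
    simp
  choose mz hmz using htrans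
  -- non-prefix facts
  have hnp_z : ∀ j i, ¬ LL j <+: code hT c v₀ (γ⁻¹ (s i)) := by
    intro j i hpre
    rw [hmz i] at hpre
    have h1 : LL j = code hT c v₀ p ++ (c p (γ u) :: ((List.range (j + 1)).map δ ++ [a₀])) := by
      rw [hLLdef, hAdef]; dsimp only
      rw [hcu']
      simp [List.append_assoc]
    have h2 : code hT c v₀ u ++ mz i = code hT c v₀ p ++ (c p u :: mz i) := by
      rw [hcu]
      simp [List.append_assoc]
    rw [h1, h2] at hpre
    obtain ⟨t, ht⟩ := hpre
    rw [List.append_assoc] at ht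
    have h3 := List.append_cancel_left ht
    rw [List.cons_append] at h3
    injection h3 with h4 h5
    exact hab h4.symm
  have hlenA : ∀ j, (A j).length = (code hT c v₀ (γ u)).length + (j + 1) := by
    intro j; rw [hAdef]; simp
  have hnp_s : ∀ j i, j ≠ i → ¬ LL j <+: code hT c v₀ (s i) := by
    intro j i hnej hpre
    rw [hcs i] at hpre
    have h2 : LL i ++ [β] = A i ++ [a₀, β] := by
      rw [hLLdef]; dsimp only
      simp
    rw [h2] at hpre
    have hlenle := hpre.length_le
    rw [hLLdef] at hlenle; dsimp only at hlenle
    rw [List.length_append, List.length_append, hlenA j, hlenA i] at hlenle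
    simp only [List.length_singleton, List.length_cons, List.length_nil] at hlenle
    rcases lt_trichotomy j i with hlt | heq | hgt
    · obtain ⟨TAIL0, hT0⟩ : ∃ TAIL0, List.range (i + 1) = List.range (j + 2) ++ TAIL0 := by
        have h4 : List.range (j + 2) = (List.range (i + 1)).take (j + 2) := by
          rw [List.take_range]
          congr 1
          omega
        exact ⟨(List.range (i + 1)).drop (j + 2), by rw [h4, List.take_append_drop]⟩
      obtain ⟨TAIL, hAi⟩ : ∃ TAIL, A i = A j ++ (δ (j + 1) :: TAIL) := by
        refine ⟨TAIL0.map δ, ?_⟩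
        rw [hAdef]; dsimp only
        rw [hT0, List.range_succ, List.map_append, List.map_append, List.map_singleton,
          List.append_assoc, List.append_assoc]
        simp [List.append_assoc]
      rw [hAi] at hpre
      obtain ⟨t, ht⟩ := hpre
      rw [hLLdef] at ht; dsimp only at ht
      rw [List.append_assoc, List.append_assoc] at ht
      have h3 := List.append_cancel_left ht
      rw [List.singleton_append, List.cons_append] at h3
      injection h3 with h4 h5
      exact hδa (j + 1) h4.symm
    · exact hnej heq
    · have hji : j = i + 1 := by omega
      subst hji
      have hAj : A (i + 1) = A i ++ [δ (i + 1)] := by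
        rw [hAdef]; dsimp only
        rw [List.range_succ, List.map_append, List.map_singleton, List.append_assoc]
      rw [hLLdef] at hpre; dsimp only at hpre
      rw [hAj] at hpre
      obtain ⟨t, ht⟩ := hpre
      rw [List.append_assoc, List.append_assoc] at ht
      have h3 := List.append_cancel_left ht
      rw [List.singleton_append, List.singleton_append] at h3
      injection h3 with h4 h5
      exact hδa (i + 1) h4
  -- value computations
  have hks : ∀ i, k i (s i) = nbr hbij (q i) (π β) := by
    intro i
    rw [hkapply, rotF, hcs i, tfm_snoc_A2 (LL i) π ff β, tfm_self, follow_snoc, hqdef]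
  have hne_s : ∀ i, nbr hbij (q i) (π β) ≠ s i := by
    intro i h
    apply hβ
    have h2 := congrArg (fun z => c (q i) z) h
    rw [c_nbr hbij, hcqs i] at h2
    exact h2
  have hfix_z : ∀ j i, (k j)⁻¹ (γ⁻¹ (s i)) = γ⁻¹ (s i) := by
    intro j i
    rw [hkinv]
    exact rotF_fix hT hbij v₀ (LL j) π⁻¹ _ (hnp_z j i)
  have hfix_s : ∀ j i, j ≠ i → k j (s i) = s i := by
    intro j i hnej
    rw [hkapply]
    exact rotF_fix hT hbij v₀ (LL j) π ff (hnp_s j i hnej)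
  -- the conjugates
  obtain ⟨X, hXdef⟩ : ∃ X : ℕ → Equiv.Perm V, X = fun j => k j * γ * (k j)⁻¹ := ⟨_, rfl⟩
  have hXval_ne : ∀ j i, j ≠ i → X j (γ⁻¹ (s i)) = s i := by
    intro j i hnej
    rw [hXdef]; dsimp only
    rw [Equiv.Perm.mul_apply, Equiv.Perm.mul_apply, hfix_z j i, Equiv.Perm.apply_inv_self,
      hfix_s j i hnej]
  have hXval_eq : ∀ i, X i (γ⁻¹ (s i)) = nbr hbij (q i) (π β) := by
    intro i
    rw [hXdef]; dsimp only
    rw [Equiv.Perm.mul_apply, Equiv.Perm.mul_apply, hfix_z i i, Equiv.Perm.apply_inv_self, hks i]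
  have hXinj : Function.Injective X := by
    intro i j hij
    by_contra hne2
    apply hne_s i
    rw [← hXval_eq i, hij, hXval_ne j i (Ne.symm hne2)]
  refine Set.infinite_of_injective_forall_mem hXinj ?_
  intro i
  simp only [Set.mem_setOf_eq]
  exact ⟨k i, hkmem i, hkv₀ i, by rw [hXdef]⟩

end PrescribedLocalAction
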